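/- Let X and C be independent real-valued random variables on a probability space, and suppose the CDF F of X, defined by F(x) = P(X ≤ x), is continuous; let S = 1 − F. Set T = min(X, C), let Δ be the indicator of {X ≤ C}, and let ℛ = Δ·F(T) + (1 − Δ)·(1 − S(T)/2). Then Var(ℛ) = (1/12)·(1 − E[ S(C)³ ]). -/

import Mathlib

open MeasureTheory Set Filter
open scoped Topology

lemma aux_measure_F_le (μ : Measure ℝ) [IsProbabilityMeasure μ] (F : ℝ → ℝ)
    (hF : ∀ x, F x = (μ (Set.Iic x)).toReal) (hFc : Continuous F)
    (u : ℝ) (h0 : 0 ≤ u) (h1 : u ≤ 1) :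
    μ {x | F x ≤ u} = ENNReal.ofReal u := by
  have hFcdf : F = ProbabilityTheory.cdf μ := by
    funext x; rw [hF, ProbabilityTheory.cdf_eq_real, measureReal_def]
  have hmono : Monotone F := hFcdf ▸ ProbabilityTheory.monotone_cdf μ
  have htop : Tendsto F atTop (𝓝 1) := hFcdf ▸ ProbabilityTheory.tendsto_cdf_atTop μ
  have hbot : Tendsto F atBot (𝓝 0) := hFcdf ▸ ProbabilityTheory.tendsto_cdf_atBot μ
  have hle1 : ∀ x, F x ≤ 1 := fun x => hFcdf ▸ ProbabilityTheory.cdf_le_one μ x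
  have hIic : ∀ x, μ (Iic x) = ENNReal.ofReal (F x) := by
    intro x; rw [hF, ENNReal.ofReal_toReal (measure_ne_top μ _)]
  rcases eq_or_lt_of_le h1 with hu1 | hu1
  · subst hu1
    have : {x | F x ≤ 1} = univ := eq_univ_of_forall (fun x => hle1 x)
    rw [this, measure_univ, ENNReal.ofReal_one]
  · by_cases hs : {x | F x ≤ u}.Nonempty
    · have hclosed : IsClosed {x | F x ≤ u} := isClosed_le hFc continuous_const
      have hbdd : BddAbove {x | F x ≤ u} := by
        obtain ⟨x0, hx0⟩ := (htop.eventually_const_lt hu1).exists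
        refine ⟨x0, fun y hy => ?_⟩
        by_contra hxy
        exact absurd (le_trans (hmono (le_of_not_ge hxy)) hy) (not_le.2 hx0)
      set b := sSup {x | F x ≤ u} with hb
      have hbmem : b ∈ {x | F x ≤ u} := hclosed.csSup_mem hs hbdd
      have hseq : {x | F x ≤ u} = Iic b := by
        apply Subset.antisymm (fun y hy => le_csSup hbdd hy)
        exact fun y hy => le_trans (hmono hy) hbmem
      have hFb : F b = u := by
        refine le_antisymm hbmem (le_of_not_gt fun hlt => ?_)
        have hev : ∀ᶠ y in 𝓝[>] b, F y < u :=
          ((hFc.tendsto b).eventually_lt_const hlt).filter_mono nhdsWithin_le_nhds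
        obtain ⟨y, hy1, hy2⟩ := (hev.and (eventually_mem_nhdsWithin)).exists
        exact absurd (le_csSup hbdd (le_of_lt hy1)) (not_le.2 hy2)
      rw [hseq, hIic, hFb]
    · rw [not_nonempty_iff_eq_empty] at hs
      rw [hs, measure_empty]
      rcases eq_or_lt_of_le h0 with h | h
      · rw [← h, ENNReal.ofReal_zero]
      · exfalso
        obtain ⟨x, hx⟩ := (hbot.eventually_lt_const h).exists
        exact (Set.eq_empty_iff_forall_notMem.1 hs x) (le_of_lt hx)

lemma aux_map_F (μ : Measure ℝ) [IsProbabilityMeasure μ] (F : ℝ → ℝ)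
    (hF : ∀ x, F x = (μ (Set.Iic x)).toReal) (hFc : Continuous F) :
    μ.map F = volume.restrict (Set.Ioc (0:ℝ) 1) := by
  have hF0 : ∀ x, 0 ≤ F x := fun x => (hF x) ▸ ENNReal.toReal_nonneg
  have hF1 : ∀ x, (F x) ≤ 1 := fun x => (hF x) ▸
    (ENNReal.toReal_le_of_le_ofReal one_pos.le (by simpa using prob_le_one))
  haveI : IsProbabilityMeasure (μ.map F) :=
    Measure.isProbabilityMeasure_map hFc.measurable.aemeasurable
  refine Measure.ext_of_Iic (μ.map F) _ (fun a => ?_)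
  rw [Measure.map_apply hFc.measurable measurableSet_Iic,
    Measure.restrict_apply measurableSet_Iic]
  have hpre : F ⁻¹' Iic a = {x | F x ≤ a} := rfl
  rcases lt_or_ge a 0 with ha | ha
  · have h1 : {x | F x ≤ a} = ∅ :=
      eq_empty_iff_forall_notMem.2 fun x hx => absurd (le_trans (hF0 x) hx) (not_le.2 ha)
    have h2 : Iic a ∩ Ioc (0:ℝ) 1 = ∅ := by
      apply eq_empty_iff_forall_notMem.2
      rintro x ⟨hx1, hx2, _⟩
      exact absurd (lt_of_lt_of_le hx2 hx1) (not_lt.2 ha.le)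
    rw [hpre, h1, h2, measure_empty, measure_empty]
  · rcases le_or_gt a 1 with ha1 | ha1
    · rw [hpre, aux_measure_F_le μ F hF hFc a ha ha1]
      have : Iic a ∩ Ioc (0:ℝ) 1 = Ioc 0 a := by
        ext x
        simp only [mem_inter_iff, mem_Iic, mem_Ioc, mem_setOf_eq]
        constructor
        · rintro ⟨h1, h2, h3⟩; exact ⟨h2, h1⟩
        · rintro ⟨h1, h2⟩; exact ⟨h2, h1, le_trans h2 ha1⟩
      rw [this, Real.volume_Ioc, sub_zero]
    · have h1 : {x | F x ≤ a} = univ := eq_univ_of_forall fun x => le_trans (hF1 x) ha1.le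
      have h2 : Iic a ∩ Ioc (0:ℝ) 1 = Ioc 0 1 := by
        apply inter_eq_self_of_subset_right
        exact fun x hx => le_trans hx.2 ha1.le
      rw [hpre, h1, h2, measure_univ, Real.volume_Ioc]
      norm_num

lemma aux_bad_set (μ : Measure ℝ) [IsProbabilityMeasure μ] (F : ℝ → ℝ)
    (hF : ∀ x, F x = (μ (Set.Iic x)).toReal) (hFc : Continuous F) (c : ℝ) :
    μ {x | c < x ∧ F x ≤ F c} = 0 := by
  have hF0 : 0 ≤ F c := (hF c) ▸ ENNReal.toReal_nonneg
  have hF1 : (F c) ≤ 1 := (hF c) ▸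
    (ENNReal.toReal_le_of_le_ofReal one_pos.le (by simpa using prob_le_one))
  have hmono : Monotone F := by
    intro x y hxy
    rw [hF, hF]
    exact ENNReal.toReal_mono (measure_ne_top μ _) (measure_mono (Iic_subset_Iic.2 hxy))
  have hset : {x | c < x ∧ F x ≤ F c} = {x | F x ≤ F c} \ Iic c := by
    ext x
    simp only [mem_setOf_eq, mem_diff, mem_Iic, not_le]
    tauto
  have hsub : Iic c ⊆ {x | F x ≤ F c} := fun x hx => hmono hx
  have hIic : μ (Iic c) = ENNReal.ofReal (F c) := by
    rw [hF, ENNReal.ofReal_toReal (measure_ne_top μ _)]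
  rw [hset, measure_diff hsub nullMeasurableSet_Iic (measure_ne_top μ _),
    aux_measure_F_le μ F hF hFc (F c) hF0 hF1, hIic, tsub_self]

lemma aux_inner (μ : Measure ℝ) [IsProbabilityMeasure μ] (F : ℝ → ℝ)
    (hF : ∀ x, F x = (μ (Set.Iic x)).toReal) (hFc : Continuous F)
    (c k : ℝ) (g : ℝ → ℝ) (hg : Continuous g) :
    ∫ x, (if x ≤ c then g (F x) else k) ∂μ
      = (∫ u in Set.Ioc (0:ℝ) (F c), g u) + (1 - F c) * k := by
  have hF0 : ∀ x, 0 ≤ F x := fun x => (hF x) ▸ ENNReal.toReal_nonneg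
  have hF1 : ∀ x, (F x) ≤ 1 := fun x => (hF x) ▸
    (ENNReal.toReal_le_of_le_ofReal one_pos.le (by simpa using prob_le_one))
  have hmono : Monotone F := by
    intro x y hxy
    rw [hF, hF]
    exact ENNReal.toReal_mono (measure_ne_top μ _) (measure_mono (Iic_subset_Iic.2 hxy))
  set h : ℝ → ℝ := fun u => if u ≤ F c then g u else k with hh
  have hhmeas : Measurable h := Measurable.ite measurableSet_Iic hg.measurable measurable_const
  -- step 1 : a.e. rewrite
  have hae : (fun x => if x ≤ c then g (F x) else k) =ᵐ[μ] fun x => h (F x) := by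
    refine measure_mono_null ?_ (aux_bad_set μ F hF hFc c)
    intro x hx
    simp only [mem_setOf_eq, hh] at hx ⊢
    by_cases h1 : x ≤ c
    · exact absurd (by simp [h1, hmono h1]) hx
    · constructor
      · exact not_le.1 h1
      · by_contra h2
        exact hx (by simp [h1, h2])
  rw [integral_congr_ae hae]
  -- step 2 : change of variables
  have hmap : ∫ x, h (F x) ∂μ = ∫ u in Set.Ioc (0:ℝ) 1, h u := by
    rw [← integral_map hFc.measurable.aemeasurable hhmeas.aestronglyMeasurable,
      aux_map_F μ F hF hFc]
  rw [hmap]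
  -- step 3 : split the interval
  have hsplit : Set.Ioc (0:ℝ) 1 = Set.Ioc 0 (F c) ∪ Set.Ioc (F c) 1 :=
    (Set.Ioc_union_Ioc_eq_Ioc (hF0 c) (hF1 c)).symm
  have hdisj : Disjoint (Set.Ioc (0:ℝ) (F c)) (Set.Ioc (F c) 1) := Set.Ioc_disjoint_Ioc_of_le le_rfl
  have hint1 : IntegrableOn h (Set.Ioc (0:ℝ) (F c)) volume := by
    apply (hg.integrableOn_Ioc).congr_fun ?_ measurableSet_Ioc
    intro u hu; simp [hh, hu.2]
  have hint2 : IntegrableOn h (Set.Ioc (F c) 1) volume := by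
    apply (integrableOn_const (C := k) (μ := volume) (s := Set.Ioc (F c) 1) measure_Ioc_lt_top.ne).congr_fun ?_ measurableSet_Ioc
    intro u hu; simp [hh, not_le.2 hu.1]
  rw [hsplit, setIntegral_union hdisj measurableSet_Ioc hint1 hint2]
  have e1 : ∫ u in Set.Ioc (0:ℝ) (F c), h u = ∫ u in Set.Ioc (0:ℝ) (F c), g u := by
    apply setIntegral_congr_fun measurableSet_Ioc
    intro u hu; simp [hh, hu.2]
  have e2 : ∫ u in Set.Ioc (F c) 1, h u = (1 - F c) * k := by
    rw [setIntegral_congr_fun measurableSet_Ioc (g := fun _ => k) (fun u hu => by simp [hh, not_le.2 hu.1]),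
      setIntegral_const, measureReal_def, Real.volume_Ioc, ENNReal.toReal_ofReal (by linarith [hF1 c]), smul_eq_mul]
  rw [e1, e2]

/-- Variance statement of Theorem 1: for independent real random variables `X`, `C` on a
probability space, with `F x = P{X ≤ x}` continuous, `S = 1 - F`, `T = min X C`,
`Δ = 1{X ≤ C}`, and `ℛ = Δ·F(T) + (1 − Δ)·(1 − S(T)/2)`, we have
`Var(ℛ) = (1/12)·(1 − E[S(C)³])`, where `Var(ℛ) = E[ℛ²] − (E[ℛ])²`. -/
theorem imputedRank_variance {Ω : Type*} [MeasurableSpace Ω] (P : Measure Ω)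
    [IsProbabilityMeasure P]
    (X C : Ω → ℝ) (hX : Measurable X) (hC : Measurable C)
    (hXC : ProbabilityTheory.IndepFun X C P)
    (F : ℝ → ℝ) (hF : ∀ x, F x = (P {ω | X ω ≤ x}).toReal)
    (hFc : Continuous F) :
    (∫ ω, ((if X ω ≤ C ω then (1 : ℝ) else 0) * F (min (X ω) (C ω))
        + (1 - if X ω ≤ C ω then (1 : ℝ) else 0)
          * (1 - (1 - F (min (X ω) (C ω))) / 2)) ^ 2 ∂P)
      - (∫ ω, ((if X ω ≤ C ω then (1 : ℝ) else 0) * F (min (X ω) (C ω))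
        + (1 - if X ω ≤ C ω then (1 : ℝ) else 0)
          * (1 - (1 - F (min (X ω) (C ω))) / 2)) ∂P) ^ 2
      = (1 / 12) * (1 - ∫ ω, (1 - F (C ω)) ^ 3 ∂P) := by
  set μ := P.map X with hμ
  set ν := P.map C with hν
  haveI hμP : IsProbabilityMeasure μ := Measure.isProbabilityMeasure_map hX.aemeasurable
  haveI hνP : IsProbabilityMeasure ν := Measure.isProbabilityMeasure_map hC.aemeasurable
  have hF' : ∀ x, F x = (μ (Set.Iic x)).toReal := by
    intro x
    rw [hF, hμ, Measure.map_apply hX measurableSet_Iic]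
    rfl
  have hF0 : ∀ x, 0 ≤ F x := fun x => (hF' x) ▸ ENNReal.toReal_nonneg
  have hF1 : ∀ x, (F x) ≤ 1 := fun x => (hF' x) ▸
    (ENNReal.toReal_le_of_le_ofReal one_pos.le (by simpa using prob_le_one))
  set Φ : ℝ × ℝ → ℝ := fun z => if z.2 ≤ z.1 then F z.2 else (1 + F z.1) / 2 with hΦ
  have hΦmeas : Measurable Φ := by
    apply Measurable.ite (measurableSet_le measurable_snd measurable_fst)
    · exact hFc.measurable.comp measurable_snd
    · exact ((continuous_const.add (hFc.comp continuous_fst)).div_const 2).measurable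
  have hΦ01 : ∀ z, 0 ≤ Φ z ∧ Φ z ≤ 1 := by
    intro z
    simp only [hΦ]
    split_ifs
    · exact ⟨hF0 _, hF1 _⟩
    · constructor
      · linarith [hF0 z.1]
      · linarith [hF1 z.1]
  -- generic Fubini step
  have key : ∀ (G : ℝ × ℝ → ℝ), Measurable G → (∀ z, ‖G z‖ ≤ 1) →
      ∫ ω, G (C ω, X ω) ∂P = ∫ c, ∫ x, G (c, x) ∂μ ∂ν := by
    intro G hG hGb
    have hmap : P.map (fun ω => (C ω, X ω)) = ν.prod μ :=
      (ProbabilityTheory.indepFun_iff_map_prod_eq_prod_map_map hC.aemeasurable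
        hX.aemeasurable).1 hXC.symm
    have hint : Integrable G (ν.prod μ) :=
      (integrable_const 1).mono' hG.aestronglyMeasurable (ae_of_all _ fun z => by
        simpa using hGb z)
    rw [← integral_map (hC.prodMk hX).aemeasurable hG.aestronglyMeasurable, hmap,
      integral_prod _ hint]
  -- the integrand equals Φ ∘ (C, X)
  have hexpr : ∀ ω, ((if X ω ≤ C ω then (1 : ℝ) else 0) * F (min (X ω) (C ω))
        + (1 - if X ω ≤ C ω then (1 : ℝ) else 0)
          * (1 - (1 - F (min (X ω) (C ω))) / 2)) = Φ (C ω, X ω) := by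
    intro ω
    by_cases h : X ω ≤ C ω
    · simp only [hΦ, h, if_true, min_eq_left h]
      ring
    · simp only [hΦ, h, if_false, min_eq_right (le_of_not_ge h)]
      ring
  -- mean
  have hmean : ∫ ω, Φ (C ω, X ω) ∂P = 1 / 2 := by
    rw [key Φ hΦmeas (fun z => by
      rw [Real.norm_eq_abs, abs_le]
      exact ⟨by linarith [(hΦ01 z).1], (hΦ01 z).2⟩)]
    have hin : ∀ c : ℝ, ∫ x, Φ (c, x) ∂μ = 1 / 2 := by
      intro c
      have : ∀ x : ℝ, Φ (c, x) = if x ≤ c then id (F x) else (1 + F c) / 2 := fun x => rfl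
      rw [integral_congr_ae (ae_of_all _ this),
        aux_inner μ F hF' hFc c ((1 + F c) / 2) id continuous_id,
        ← intervalIntegral.integral_of_le (hF0 c)]
      simp only [id_eq]
      rw [integral_id]
      ring
    rw [integral_congr_ae (ae_of_all _ hin), integral_const]
    simp
  -- second moment
  have hsq : ∫ ω, (Φ (C ω, X ω)) ^ 2 ∂P
      = 1 / 3 - (∫ c, (1 - F c) ^ 3 ∂ν) / 12 := by
    rw [key (fun z => (Φ z) ^ 2) (hΦmeas.pow_const 2) (fun z => by
      have h := hΦ01 z
      show ‖Φ z ^ 2‖ ≤ 1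
      rw [Real.norm_eq_abs, abs_le]
      constructor
      · nlinarith [h.1]
      · nlinarith [h.1, h.2])]
    have hin : ∀ c : ℝ, ∫ x, (Φ (c, x)) ^ 2 ∂μ
        = 1 / 3 - (1 - F c) ^ 3 / 12 := by
      intro c
      have : ∀ x : ℝ, (Φ (c, x)) ^ 2
          = if x ≤ c then (fun u => u ^ 2) (F x) else ((1 + F c) / 2) ^ 2 := by
        intro x
        by_cases h : x ≤ c <;> simp [hΦ, h]
      rw [integral_congr_ae (ae_of_all _ this),
        aux_inner μ F hF' hFc c (((1 + F c) / 2) ^ 2) (fun u => u ^ 2)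
          (continuous_pow 2),
        ← intervalIntegral.integral_of_le (hF0 c), integral_pow 2]
      push_cast
      ring
    rw [integral_congr_ae (ae_of_all _ hin)]
    have hintc : Integrable (fun c => (1 - F c) ^ 3) ν := by
      refine (integrable_const 1).mono'
        (((continuous_const.sub hFc).pow 3).measurable.aestronglyMeasurable)
        (ae_of_all _ fun c => ?_)
      have h3 : 0 ≤ (1 - F c) ^ 3 := pow_nonneg (by linarith [hF1 c]) 3
      have h4 : (1 - F c) ^ 3 ≤ 1 := pow_le_one₀ (by linarith [hF1 c]) (by linarith [hF0 c])
      rw [Real.norm_eq_abs, abs_le]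
      constructor <;> linarith
    rw [integral_sub (integrable_const _) (hintc.div_const 12), integral_const,
      integral_div]
    simp
  -- tail expectation transfer
  have hC3 : ∫ ω, (1 - F (C ω)) ^ 3 ∂P = ∫ c, (1 - F c) ^ 3 ∂ν := by
    rw [hν]; exact (integral_map hC.aemeasurable
      (((continuous_const.sub hFc).pow 3).measurable.aestronglyMeasurable)).symm
  calc (∫ ω, ((if X ω ≤ C ω then (1 : ℝ) else 0) * F (min (X ω) (C ω))
        + (1 - if X ω ≤ C ω then (1 : ℝ) else 0)
          * (1 - (1 - F (min (X ω) (C ω))) / 2)) ^ 2 ∂P)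
      - (∫ ω, ((if X ω ≤ C ω then (1 : ℝ) else 0) * F (min (X ω) (C ω))
        + (1 - if X ω ≤ C ω then (1 : ℝ) else 0)
          * (1 - (1 - F (min (X ω) (C ω))) / 2)) ∂P) ^ 2
      = (∫ ω, (Φ (C ω, X ω)) ^ 2 ∂P) - (∫ ω, Φ (C ω, X ω) ∂P) ^ 2 := by
        congr 2
        · exact funext fun ω => by rw [hexpr ω]
        · exact integral_congr_ae (ae_of_all _ fun ω => hexpr ω)
    _ = (1 / 3 - (∫ c, (1 - F c) ^ 3 ∂ν) / 12) - (1 / 2) ^ 2 := by rw [hsq, hmean]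
    _ = (1 / 12) * (1 - ∫ c, (1 - F c) ^ 3 ∂ν) := by ring
    _ = (1 / 12) * (1 - ∫ ω, (1 - F (C ω)) ^ 3 ∂P) := by rw [hC3]
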